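/- Assume W is finite. For I ⊆ B, let Q_I := Σ_{J : I ⊊ J ⊆ B} P_J (the sum of the subspaces P_J over subsets J strictly containing I). Then Q_I ⊆ P_I, and the ℂ-vector space dimension of the quotient P_I / Q_I equals the number of elements w ∈ W with D_L(w) = I. -/

import Mathlib

open scoped Classical

noncomputable section

set_option linter.unusedSectionVars false

set_option maxHeartbeats 1000000 in
section
end

namespace HGA

variable {B : Type*} {W : Type*} [Group W] {M : CoxeterMatrix B}

/-- `σ_i` : the linear extension to `ℂ[W]` of right multiplication by the simple
reflection `s_i`. -/
def sigmaOp (cs : CoxeterSystem M W) (i : B) : Module.End ℂ (MonoidAlgebra ℂ W) :=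
  (Finsupp.lift (MonoidAlgebra ℂ W) ℂ W fun w =>
    MonoidAlgebra.single (w * cs.simple i) (1 : ℂ)).comp (MonoidAlgebra.coeffLinearEquiv ℂ).toLinearMap

/-- `π_i` : the antisorting (0-Hecke) operator: on a basis element `w` it gives `w * s_i`
if `i` is not a right descent of `w`, and `w` otherwise. -/
def piOp (cs : CoxeterSystem M W) (i : B) : Module.End ℂ (MonoidAlgebra ℂ W) :=
  (Finsupp.lift (MonoidAlgebra ℂ W) ℂ W fun w =>
    if cs.IsRightDescent w i then MonoidAlgebra.single w (1 : ℂ)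
    else MonoidAlgebra.single (w * cs.simple i) (1 : ℂ)).comp (MonoidAlgebra.coeffLinearEquiv ℂ).toLinearMap

/-- `π̄_i` : the sorting operator: on a basis element `w` it gives `w * s_i`
if `i` is a right descent of `w`, and `w` otherwise. -/
def piBarOp (cs : CoxeterSystem M W) (i : B) : Module.End ℂ (MonoidAlgebra ℂ W) :=
  (Finsupp.lift (MonoidAlgebra ℂ W) ℂ W fun w =>
    if cs.IsRightDescent w i then MonoidAlgebra.single (w * cs.simple i) (1 : ℂ)
    else MonoidAlgebra.single w (1 : ℂ)).comp (MonoidAlgebra.coeffLinearEquiv ℂ).toLinearMap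

/-- `P_I` : the subspace of vectors of `ℂ[W]` that are antisymmetric on the left
for every `i ∈ I`, i.e. `s_i · v = −v` (left multiplication in `ℂ[W]`) for all `i ∈ I`. -/
def PSub (cs : CoxeterSystem M W) (I : Set B) : Submodule ℂ (MonoidAlgebra ℂ W) where
  carrier := {v | ∀ i ∈ I, MonoidAlgebra.single (cs.simple i) (1 : ℂ) * v = -v}
  add_mem' := by
    intro a b ha hb i hi
    rw [mul_add, ha i hi, hb i hi, neg_add]
  zero_mem' := by
    intro i hi
    simp
  smul_mem' := by
    intro c v hv i hi
    rw [Algebra.mul_smul_comm, hv i hi, smul_neg]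

/-- `Q_I` : the sum of the subspaces `P_J` over the subsets `J` strictly containing `I`. -/
def QSub (cs : CoxeterSystem M W) (I : Set B) : Submodule ℂ (MonoidAlgebra ℂ W) :=
  ⨆ J ∈ {J : Set B | I ⊂ J}, PSub cs J



open CoxeterSystem List

/-- Carrier for the reflection-cocycle group: pairs of a `ZMod 2`-valued function on `W`
and an element of `W`. -/
structure NG (W : Type*) where
  fn : W → ZMod 2
  el : W

namespace NG

variable {W : Type*} [Group W]

/-- Conjugation action of `W` on functions `W → ZMod 2`. -/
def act (x : W) (f : W → ZMod 2) : W → ZMod 2 := fun t => f (x⁻¹ * t * x)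

@[simp] theorem act_apply (x : W) (f : W → ZMod 2) (t : W) : act x f t = f (x⁻¹ * t * x) := rfl

theorem act_act (x y : W) (f : W → ZMod 2) : act x (act y f) = act (x * y) f := by
  funext t
  simp [act, mul_assoc]

@[simp] theorem act_one (f : W → ZMod 2) : act (1 : W) f = f := by
  funext t; simp [act]

theorem act_add (x : W) (f g : W → ZMod 2) : act x (f + g) = act x f + act x g := by
  funext t; simp [act]

@[simp] theorem act_zero (x : W) : act x (0 : W → ZMod 2) = 0 := by
  funext t; simp [act]

instance : Mul (NG W) := ⟨fun a b => ⟨a.fn + act a.el b.fn, a.el * b.el⟩⟩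
instance : One (NG W) := ⟨⟨0, 1⟩⟩
instance : Inv (NG W) := ⟨fun a => ⟨act a.el⁻¹ a.fn, a.el⁻¹⟩⟩

@[simp] theorem mul_fn (a b : NG W) : (a * b).fn = a.fn + act a.el b.fn := rfl
@[simp] theorem mul_el (a b : NG W) : (a * b).el = a.el * b.el := rfl
@[simp] theorem one_fn : (1 : NG W).fn = 0 := rfl
@[simp] theorem one_el : (1 : NG W).el = 1 := rfl

theorem ext' {a b : NG W} (h1 : a.fn = b.fn) (h2 : a.el = b.el) : a = b := by
  cases a; cases b; cases h1; cases h2; rfl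

instance : Group (NG W) where
  mul_assoc a b c := by
    apply ext'
    · simp [act_add, act_act, add_assoc]
    · simp [mul_assoc]
  one_mul a := by apply ext' <;> simp
  mul_one a := by apply ext' <;> simp
  inv_mul_cancel a := by
    apply ext'
    · show act a.el⁻¹ a.fn + act (a.el⁻¹) a.fn = 0
      funext t
      exact CharTwo.add_self_eq_zero _
    · show a.el⁻¹ * a.el = 1
      simp

end NG

section cocycle

variable {B : Type*} {W : Type*} [Group W] {M : CoxeterMatrix B}

variable (cs : CoxeterSystem M W)

local prefix:100 "s" => cs.simple
local prefix:100 "ℓ" => cs.length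
local prefix:100 "π" => cs.wordProd

/-- Indicator function of a point. -/
def dd (g : W) : W → ZMod 2 := fun t => if t = g then 1 else 0

theorem act_dd (x g : W) : NG.act x (dd g) = dd (x * g * x⁻¹) := by
  funext t
  by_cases h : x⁻¹ * t * x = g
  · have h2 : t = x * g * x⁻¹ := by rw [← h]; group
    simp only [NG.act_apply, dd, if_pos h, if_pos h2]
  · have h2 : ¬ t = x * g * x⁻¹ := fun hc => h (by rw [hc]; group)
    simp only [NG.act_apply, dd, if_neg h, if_neg h2]

theorem shuffle (a b : W) (k : ℕ) : a * (b * a) ^ k = (a * b) ^ k * a :=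
  ((SemiconjBy.pow_right (by simp [SemiconjBy, mul_assoc] : SemiconjBy a (b*a) (a*b)) k)).eq

/-- The generator images for the cocycle homomorphism. -/
def ngen (i : B) : NG W := ⟨dd (s i), s i⟩

theorem ngen_liftable : M.IsLiftable (ngen cs) := by
  intro i j
  set a := s i
  set b := s j
  set m := M i j with hm
  have hrel : (a * b) ^ m = 1 := cs.simple_mul_simple_pow i j
  have ha : a * a = 1 := cs.simple_mul_simple_self i
  have hb : b * b = 1 := cs.simple_mul_simple_self j
  have hainv : a⁻¹ = a := cs.inv_simple i
  have hbinv : b⁻¹ = b := cs.inv_simple j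
  -- the product of the two generators
  have hprod : ngen cs i * ngen cs j = ⟨dd a + NG.act a (dd b), a * b⟩ := rfl
  -- conjugation identities
  have hconj : ∀ k : ℕ, ((a*b)^k)⁻¹ = (b*a)^k := by
    intro k
    rw [← inv_pow, mul_inv_rev, hainv, hbinv]
  -- power computation in `NG W`
  have hpow : ∀ (c : W → ZMod 2) (r : W) (k : ℕ),
      (⟨c, r⟩ : NG W) ^ k = ⟨∑ e ∈ Finset.range k, NG.act (r ^ e) c, r ^ k⟩ := by
    intro c r k
    induction k with
    | zero => simp; rfl
    | succ k ih =>
      rw [pow_succ, ih]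
      apply NG.ext'
      · show (∑ e ∈ Finset.range k, NG.act (r ^ e) c) + NG.act (r ^ k) c = _
        rw [Finset.sum_range_succ]
      · show r ^ k * r = r ^ (k + 1)
        rw [pow_succ]
  -- identify individual terms
  have hterm : ∀ e : ℕ, NG.act ((a*b) ^ e) (dd a + NG.act a (dd b))
      = dd ((a*b) ^ (2*e) * a) + dd ((a*b) ^ (2*e+1) * a) := by
    intro e
    rw [NG.act_add, NG.act_act, act_dd, act_dd]
    have e1 : (a*b)^e * a * ((a*b)^e)⁻¹ = (a*b)^(2*e) * a := by
      rw [hconj, mul_assoc, shuffle, ← mul_assoc, ← pow_add, two_mul]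
    have e2 : (a*b)^e * a * b * ((a*b)^e * a)⁻¹ = (a*b)^(2*e+1) * a := by
      rw [mul_inv_rev, hainv, hconj]
      calc (a*b)^e * a * b * (a * (b*a)^e)
          = (a*b)^(e+1) * ((a*b)^e * a) := by
            rw [shuffle, pow_succ]
            simp [mul_assoc]
        _ = (a*b)^(2*e+1) * a := by
            rw [← mul_assoc, ← pow_add, show e+1+e = 2*e+1 by omega]
    rw [e1, e2]
  -- the total sum vanishes
  show (ngen cs i * ngen cs j) ^ m = 1
  rw [hprod, hpow]
  apply NG.ext'
  · show (∑ e ∈ Finset.range m, NG.act ((a*b) ^ e) (dd a + NG.act a (dd b))) = 0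
    have : (∑ e ∈ Finset.range m, NG.act ((a*b) ^ e) (dd a + NG.act a (dd b)))
        = ∑ e ∈ Finset.range (2*m), dd ((a*b)^e * a) := by
      rw [Finset.sum_congr rfl (fun e _ => hterm e)]
      induction m with
      | zero => simp
      | succ k ih =>
        rw [Finset.sum_range_succ, ih, two_mul, show 2*(k+1) = (2*k+1)+1 by ring,
          Finset.sum_range_succ, Finset.sum_range_succ, two_mul]
        exact (add_assoc _ _ _).symm
    rw [this, show 2*m = m + m by ring, Finset.sum_range_add]
    have hshift : ∀ e, dd ((a*b)^(m+e) * a) = dd ((a*b)^e * a) := by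
      intro e
      rw [pow_add, hrel, one_mul]
    rw [Finset.sum_congr rfl (fun e _ => hshift e)]
    funext t
    exact CharTwo.add_self_eq_zero _
  · show (a*b) ^ m = 1
    exact hrel

/-- The reflection cocycle homomorphism. -/
def nhom : W →* NG W := cs.lift ⟨ngen cs, ngen_liftable cs⟩

@[simp] theorem nhom_simple (i : B) : nhom cs (s i) = ngen cs i :=
  cs.lift_apply_simple (ngen_liftable cs) i

/-- Projection homomorphism. -/
def prEl : NG W →* W where
  toFun := NG.el
  map_one' := rfl
  map_mul' _ _ := rfl

theorem nhom_el (w : W) : (nhom cs w).el = w := by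
  have h : (prEl (W := W)).comp (nhom cs) = MonoidHom.id W := by
    apply cs.ext_simple
    intro i
    simp [prEl, ngen]
  exact DFunLike.congr_fun h w

/-- The reflection cocycle: `NN cs w t = 1` iff `t` is a left inversion of `w`. -/
def NN (w : W) : W → ZMod 2 := (nhom cs w).fn

theorem NN_mul (x y : W) : NN cs (x * y) = NN cs x + NG.act x (NN cs y) := by
  unfold NN
  rw [map_mul, NG.mul_fn, nhom_el]

@[simp] theorem NN_simple (i : B) : NN cs (s i) = dd (s i) := by
  simp [NN, ngen]

@[simp] theorem NN_one : NN cs (1 : W) = 0 := by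
  have : nhom cs (1 : W) = 1 := map_one _
  simp [NN, this]

theorem mem_leftInvSeq_of_NN_ne (ω : List B) (t : W) (h : NN cs (π ω) t ≠ 0) :
    t ∈ cs.leftInvSeq ω := by
  induction ω generalizing t with
  | nil => simp at h
  | cons k ω ih =>
    rw [cs.wordProd_cons, NN_mul] at h
    have hseq : cs.leftInvSeq (k :: ω) = s k :: List.map (MulAut.conj (s k)) (cs.leftInvSeq ω) :=
      rfl
    by_cases ht : t = s k
    · rw [hseq, ht]
      exact List.mem_cons_self
    · have h0 : dd (s k) t = 0 := by simp [dd, ht]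
      have hval : (NN cs (s k) + NG.act (s k) (NN cs (π ω))) t
          = dd (s k) t + NN cs (π ω) ((s k)⁻¹ * t * s k) := by
        simp only [Pi.add_apply, NG.act_apply, NN_simple]
      rw [hval, h0, zero_add] at h
      have h2 := ih _ h
      rw [hseq]
      apply List.mem_cons_of_mem
      refine List.mem_map.mpr ⟨(s k)⁻¹ * t * s k, h2, ?_⟩
      show s k * ((s k)⁻¹ * t * s k) * (s k)⁻¹ = t
      group

theorem length_lt_of_NN_ne {w t : W} (h : NN cs w t ≠ 0) : ℓ (t * w) < ℓ w := by
  obtain ⟨ω, hred, rfl⟩ := cs.exists_reduced_word' w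
  exact (cs.isLeftInversion_of_mem_leftInvSeq hred (mem_leftInvSeq_of_NN_ne cs ω t h)).2

theorem NN_refl_self {t : W} (ht : cs.IsReflection t) : NN cs t t = 1 := by
  obtain ⟨w, i, rfl⟩ := ht
  obtain ⟨ω, rfl⟩ := cs.wordProd_surjective w
  induction ω with
  | nil =>
    simp [dd]
  | cons k ω ih =>
    have huu : s k * s k = 1 := cs.simple_mul_simple_self k
    set t' := π ω * s i * (π ω)⁻¹ with ht'
    have htt : π (k :: ω) * s i * (π (k :: ω))⁻¹ = s k * (t' * s k) := by
      rw [cs.wordProd_cons, mul_inv_rev, cs.inv_simple, ht']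
      group
    rw [htt]
    by_cases hc : t' = s k
    · rw [hc, show s k * (s k * s k) = s k by rw [huu, mul_one], NN_simple]
      simp [dd]
    · rw [NN_mul, NN_mul]
      simp only [Pi.add_apply, NG.act_apply, NN_simple]
      have e1 : dd (s k) (s k * (t' * s k)) = 0 := by
        simp only [dd, ite_eq_right_iff]
        intro hx
        exfalso
        apply hc
        have h5 : t' * s k = 1 := mul_left_cancel (a := s k) (by rw [hx, mul_one])
        have h6 : t' = (s k)⁻¹ := mul_eq_one_iff_eq_inv.mp h5
        rw [h6, cs.inv_simple]
      have e2 : (s k)⁻¹ * (s k * (t' * s k)) * s k = t' * (s k * s k) := by group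
      rw [e2, huu, mul_one, e1, ih]
      have e3 : dd (s k) (t'⁻¹ * t' * t') = 0 := by
        rw [inv_mul_cancel, one_mul]
        simp [dd, hc]
      rw [e3]
      simp

theorem NN_of_isLeftInversion {t w : W} (ht : cs.IsReflection t) (h : ℓ (t * w) < ℓ w) :
    NN cs w t = 1 := by
  have zcases : ∀ a : ZMod 2, a = 0 ∨ a = 1 := by decide
  rcases zcases (NN cs w t) with h0 | h1
  · exfalso
    have h2 : NN cs (t * w) t = 1 := by
      rw [NN_mul]
      simp only [Pi.add_apply, NG.act_apply]
      rw [NN_refl_self cs ht]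
      rw [show t⁻¹ * t * t = t by group, h0]
      simp
    have h3 := length_lt_of_NN_ne cs (t := t) (w := t * w) (by rw [h2]; exact one_ne_zero)
    rw [← mul_assoc, ht.mul_self, one_mul] at h3
    omega
  · exact h1

/-! ### Parabolic subgroups -/

variable (I : Set B)

theorem exists_word_of_mem_closure {u : W} (hu : u ∈ Subgroup.closure (cs.simple '' I)) :
    ∃ ω : List B, (∀ i ∈ ω, i ∈ I) ∧ u = π ω := by
  induction hu using Subgroup.closure_induction with
  | mem x hx =>
    obtain ⟨i, hi, rfl⟩ := hx
    exact ⟨[i], by simpa using hi, by simp⟩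
  | one => exact ⟨[], by simp, by simp⟩
  | mul x y hx hy ihx ihy =>
    obtain ⟨ω₁, h1, rfl⟩ := ihx
    obtain ⟨ω₂, h2, rfl⟩ := ihy
    refine ⟨ω₁ ++ ω₂, ?_, (cs.wordProd_append _ _).symm⟩
    intro i hi
    rcases List.mem_append.mp hi with h | h
    · exact h1 i h
    · exact h2 i h
  | inv x hx ihx =>
    obtain ⟨ω, h1, rfl⟩ := ihx
    exact ⟨ω.reverse, fun i hi => h1 i (List.mem_reverse.mp hi), (cs.wordProd_reverse ω).symm⟩

theorem exists_reduced_word_subset (ω : List B) (hω : ∀ i ∈ ω, i ∈ I) :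
    ∃ ω' : List B, (∀ i ∈ ω', i ∈ I) ∧ cs.IsReduced ω' ∧ π ω' = π ω := by
  induction ω with
  | nil => exact ⟨[], by simp, by simp [CoxeterSystem.IsReduced], rfl⟩
  | cons k ω ih =>
    obtain ⟨β, hβI, hβred, hβ⟩ := ih (fun i hi => hω i (List.mem_cons_of_mem _ hi))
    have hk : k ∈ I := hω k (List.mem_cons_self)
    rcases cs.length_simple_mul (π β) k with hup | hdown
    · refine ⟨k :: β, ?_, ?_, ?_⟩
      · intro i hi
        rcases List.mem_cons.mp hi with rfl | h
        · exact hk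
        · exact hβI i h
      · show ℓ (π (k :: β)) = (k :: β).length
        rw [cs.wordProd_cons, hup, hβred]
        simp
      · rw [cs.wordProd_cons, cs.wordProd_cons, hβ]
    · have hne := cs.length_simple_mul_ne (π β) k
      have hdesc : ℓ (s k * π β) < ℓ (π β) := by omega
      have h1 : NN cs (π β) (s k) = 1 :=
        NN_of_isLeftInversion cs (cs.isReflection_simple k) hdesc
      have h2 : s k ∈ cs.leftInvSeq β :=
        mem_leftInvSeq_of_NN_ne cs β _ (by rw [h1]; exact one_ne_zero)
      obtain ⟨j, hj, hget⟩ := List.mem_iff_getElem.mp h2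
      have hjlen : j < β.length := by
        rw [cs.length_leftInvSeq] at hj
        exact hj
      have h3 : s k * π β = π (β.eraseIdx j) := by
        rw [← cs.getD_leftInvSeq_mul_wordProd β j]
        congr 1
        rw [List.getD_eq_getElem _ _ hj, hget]
      refine ⟨β.eraseIdx j, ?_, ?_, ?_⟩
      · intro i hi
        exact hβI i ((List.eraseIdx_sublist β j).mem hi)
      · show ℓ (π (β.eraseIdx j)) = (β.eraseIdx j).length
        rw [← h3]
        have e1 : (β.eraseIdx j).length + 1 = β.length := List.length_eraseIdx_add_one hjlen
        have e2 : ℓ (π β) = β.length := hβred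
        omega
      · rw [cs.wordProd_cons, ← h3, hβ]

theorem exists_reduced_word_of_mem_closure {u : W} (hu : u ∈ Subgroup.closure (cs.simple '' I)) :
    ∃ ω : List B, (∀ i ∈ ω, i ∈ I) ∧ cs.IsReduced ω ∧ u = π ω := by
  obtain ⟨ω, hωI, rfl⟩ := exists_word_of_mem_closure cs I hu
  obtain ⟨ω', h1, h2, h3⟩ := exists_reduced_word_subset cs I ω hωI
  exact ⟨ω', h1, h2, h3.symm⟩

theorem exists_rightDescent_of_mem_closure {u : W}
    (hu : u ∈ Subgroup.closure (cs.simple '' I)) (hne : u ≠ 1) :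
    ∃ j ∈ I, ℓ (u * s j) < ℓ u := by
  have huinv : u⁻¹ ∈ Subgroup.closure (cs.simple '' I) := inv_mem hu
  obtain ⟨ω, hωI, hred, hωeq⟩ := exists_reduced_word_of_mem_closure cs I huinv
  cases ω with
  | nil =>
    exfalso
    apply hne
    have : u⁻¹ = 1 := by rw [hωeq]; simp
    simpa using congrArg (·⁻¹) this
  | cons j ω' =>
    refine ⟨j, hωI j (List.mem_cons_self), ?_⟩
    have h1 : u * s j = (s j * u⁻¹)⁻¹ := by
      rw [mul_inv_rev, inv_inv, cs.inv_simple]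
    have h2 : s j * u⁻¹ = π ω' := by
      rw [hωeq, cs.wordProd_cons, ← mul_assoc, cs.simple_mul_simple_self, one_mul]
    have h3 : ℓ (u * s j) ≤ ω'.length := by
      rw [h1, cs.length_inv, h2]
      exact cs.length_wordProd_le ω'
    have h4 : ℓ u = ω'.length + 1 := by
      rw [← cs.length_inv, hωeq, hred]
      simp
    omega

/-- Key parabolic fact: if every element of `I` is a left descent of `w`, then
multiplying on the left by an element of the standard parabolic subgroup `W_I`
decreases length additively. -/
theorem length_parabolic_mul (w : W) (hw : ∀ i ∈ I, cs.IsLeftDescent w i) :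
    ∀ p ∈ Subgroup.closure (cs.simple '' I), ℓ (p * w) + ℓ p = ℓ w := by
  have main : ∀ n : ℕ, ∀ p ∈ Subgroup.closure (cs.simple '' I), ℓ p ≤ n →
      ℓ (p * w) + ℓ p = ℓ w := by
    intro n
    induction n with
    | zero =>
      intro p hp hlen
      have : p = 1 := cs.length_eq_zero_iff.mp (Nat.le_zero.mp hlen)
      subst this
      simp
    | succ n ihn =>
      intro p hp hlen
      by_cases hne : p = 1
      · subst hne; simp
      obtain ⟨j, hjI, hdesc⟩ := exists_rightDescent_of_mem_closure cs I hp hne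
      set p₁ := p * s j with hp₁
      have hsj : s j ∈ Subgroup.closure (cs.simple '' I) :=
        Subgroup.subset_closure ⟨j, hjI, rfl⟩
      have hp₁mem : p₁ ∈ Subgroup.closure (cs.simple '' I) := mul_mem hp hsj
      have hpp : p = p₁ * s j := by
        rw [hp₁, mul_assoc, cs.simple_mul_simple_self, mul_one]
      have hlen1 : ℓ p₁ + 1 = ℓ p := by
        have : ℓ p ≤ ℓ p₁ + 1 := by
          rw [hpp]
          calc ℓ (p₁ * s j) ≤ ℓ p₁ + ℓ (s j) := cs.length_mul_le _ _
            _ = ℓ p₁ + 1 := by rw [cs.length_simple]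
        omega
      have ih := ihn p₁ hp₁mem (by omega)
      -- t := p₁ * s j * p₁⁻¹
      set t := p₁ * s j * p₁⁻¹ with htdef
      have htrefl : cs.IsReflection t := ⟨p₁, j, rfl⟩
      have hNp₁ : NN cs p₁ t = 0 := by
        have zcases : ∀ a : ZMod 2, a = 0 ∨ a = 1 := by decide
        rcases zcases (NN cs p₁ t) with h0 | h1
        · exact h0
        · exfalso
          have := length_lt_of_NN_ne cs (t := t) (w := p₁) (by rw [h1]; exact one_ne_zero)
          rw [htdef] at this
          rw [show p₁ * s j * p₁⁻¹ * p₁ = p₁ * s j by group, ← hpp] at this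
          omega
      have hNw : NN cs w (s j) = 1 :=
        NN_of_isLeftInversion cs (cs.isReflection_simple j) (hw j hjI)
      have hNpw : NN cs (p₁ * w) t ≠ 0 := by
        rw [NN_mul]
        simp only [Pi.add_apply, NG.act_apply]
        rw [hNp₁, htdef, show p₁⁻¹ * (p₁ * s j * p₁⁻¹) * p₁ = s j by group, hNw]
        simp
      have hlt : ℓ (t * (p₁ * w)) < ℓ (p₁ * w) := length_lt_of_NN_ne cs hNpw
      have htpw : t * (p₁ * w) = p * w := by
        rw [htdef, hpp]
        group
      rw [htpw] at hlt
      -- lower bound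
      have hlow : ℓ w ≤ ℓ p + ℓ (p * w) := by
        calc ℓ w = ℓ (p⁻¹ * (p * w)) := by rw [← mul_assoc, inv_mul_cancel, one_mul]
          _ ≤ ℓ p⁻¹ + ℓ (p * w) := cs.length_mul_le _ _
          _ = ℓ p + ℓ (p * w) := by rw [cs.length_inv]
      omega
  intro p hp
  exact main (ℓ p) p hp le_rfl

theorem length_parabolic_mul_lt (w : W) (hw : ∀ i ∈ I, cs.IsLeftDescent w i)
    {p : W} (hp : p ∈ Subgroup.closure (cs.simple '' I)) (hne : p ≠ 1) :
    ℓ (p * w) < ℓ w := by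
  have h := length_parabolic_mul cs I w hw p hp
  have : ℓ p ≠ 0 := fun hc => hne (cs.length_eq_zero_iff.mp hc)
  omega

end cocycle

/-! ### The triangular family and the subspaces -/

section linalg

variable {B : Type*} {W : Type*} [Group W] {M : CoxeterMatrix B} (cs : CoxeterSystem M W)

local prefix:100 "s" => cs.simple
local prefix:100 "ℓ" => cs.length

/-- The left descent set of `w`. -/
def DL (w : W) : Set B := {i : B | cs.IsLeftDescent w i}

/-- Standard parabolic subgroup. -/
def WI (I : Set B) : Subgroup W := Subgroup.closure (cs.simple '' I)

theorem sgn_simple_mul (i : B) (v : W) :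
    ((-1 : ℂ)) ^ ℓ (s i * v) = -((-1 : ℂ) ^ ℓ v) := by
  rcases cs.length_simple_mul v i with h | h
  · rw [h, pow_succ]; ring
  · rw [← h, pow_succ]; ring

theorem PSub_mono {J D : Set B} (h : J ⊆ D) : PSub cs D ≤ PSub cs J :=
  fun _ hv i hi => hv i (h hi)

variable [Fintype W]

/-- The triangular family: the signed sum over the coset `W_{D_L(w)} w`. -/
def cvec (w : W) : MonoidAlgebra ℂ W :=
  ∑ u : WI cs (DL cs w), ((-1 : ℂ) ^ ℓ ((u : W))) • MonoidAlgebra.single ((u : W) * w) (1 : ℂ)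

theorem cvec_self (w : W) : (cvec cs w).coeff w = 1 := by
  unfold cvec
  rw [MonoidAlgebra.coeff_sum, Finset.sum_apply']
  rw [Finset.sum_eq_single (⟨1, one_mem _⟩ : WI cs (DL cs w))]
  · simp
  · intro u _ hu
    have hne : (u : W) * w ≠ w := by
      intro hc
      apply hu
      apply Subtype.ext
      have : (u : W) * w = 1 * w := by rw [hc, one_mul]
      exact mul_right_cancel this
    rw [MonoidAlgebra.coeff_smul_apply, MonoidAlgebra.coeff_single, Finsupp.single_apply, if_neg hne, smul_zero]
  · intro h
    exact absurd (Finset.mem_univ _) h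

theorem cvec_exists_of_mem_support {w x : W} (hx : x ∈ (cvec cs w).coeff.support) :
    ∃ u : WI cs (DL cs w), x = (u : W) * w := by
  by_contra hcon
  push_neg at hcon
  apply Finsupp.mem_support_iff.mp hx
  unfold cvec
  rw [MonoidAlgebra.coeff_sum, Finset.sum_apply']
  apply Finset.sum_eq_zero
  intro u _
  rw [MonoidAlgebra.coeff_smul_apply, MonoidAlgebra.coeff_single, Finsupp.single_apply, if_neg (fun hc => hcon u hc.symm), smul_zero]

theorem cvec_support_le {w x : W} (hx : x ∈ (cvec cs w).coeff.support) : x = w ∨ ℓ x < ℓ w := by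
  obtain ⟨u, rfl⟩ := cvec_exists_of_mem_support cs hx
  by_cases hu : (u : W) = 1
  · left; rw [hu, one_mul]
  · right
    exact length_parabolic_mul_lt cs (DL cs w) w (fun i hi => hi) u.2 hu

theorem cvec_mem (w : W) : cvec cs w ∈ PSub cs (DL cs w) := by
  intro i hi
  have hsi : s i ∈ WI cs (DL cs w) := Subgroup.subset_closure ⟨i, hi, rfl⟩
  unfold cvec
  rw [Finset.mul_sum, ← Finset.sum_neg_distrib]
  apply Fintype.sum_equiv (Equiv.mulLeft (⟨s i, hsi⟩ : WI cs (DL cs w)))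
  intro u
  have hcoe : ((Equiv.mulLeft (⟨s i, hsi⟩ : WI cs (DL cs w)) u : WI cs (DL cs w)) : W)
      = s i * (u : W) := rfl
  rw [hcoe]
  rw [Algebra.mul_smul_comm, MonoidAlgebra.single_mul_single, one_mul]
  rw [sgn_simple_mul cs i (u : W)]
  rw [mul_assoc]
  module

theorem PSub_apply_simple_mul {J : Set B} {v : MonoidAlgebra ℂ W} (hv : v ∈ PSub cs J)
    {i : B} (hi : i ∈ J) (x : W) : v.coeff (s i * x) = - v.coeff x := by
  have h := hv i hi
  have h2 := congrArg (fun f : MonoidAlgebra ℂ W => f.coeff (s i * x)) h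
  rw [MonoidAlgebra.coeff_single_mul_apply, one_mul, cs.inv_simple,
    cs.simple_mul_simple_cancel_left, MonoidAlgebra.coeff_neg, Finsupp.neg_apply] at h2
  rw [h2, neg_neg]

theorem descent_of_max {J : Set B} {v : MonoidAlgebra ℂ W} (hv : v ∈ PSub cs J) {w : W}
    (hw : w ∈ v.coeff.support) (hmax : ∀ x ∈ v.coeff.support, ℓ x ≤ ℓ w) : J ⊆ DL cs w := by
  intro i hi
  have h1 : v.coeff (s i * w) = - v.coeff w := PSub_apply_simple_mul cs hv hi w
  have hne : v.coeff w ≠ 0 := Finsupp.mem_support_iff.mp hw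
  have h2 : s i * w ∈ v.coeff.support :=
    Finsupp.mem_support_iff.mpr (by rw [h1]; exact neg_ne_zero.mpr hne)
  have h3 := hmax _ h2
  have h4 := cs.length_simple_mul_ne w i
  exact lt_of_le_of_ne h3 h4

theorem PSub_le_span (J : Set B) :
    PSub cs J ≤ Submodule.span ℂ (cvec cs '' {x : W | J ⊆ DL cs x}) := by
  set K := Fintype.card W + 1 with hK
  have main : ∀ n : ℕ, ∀ v ∈ PSub cs J, (∑ x ∈ v.coeff.support, K ^ ℓ x) ≤ n →
      v ∈ Submodule.span ℂ (cvec cs '' {x : W | J ⊆ DL cs x}) := by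
    intro n
    induction n using Nat.strong_induction_on with
    | _ n ihn =>
      intro v hv hμ
      by_cases hv0 : v = 0
      · rw [hv0]; exact zero_mem _
      have hsupp : v.coeff.support.Nonempty := Finsupp.support_nonempty_iff.mpr (MonoidAlgebra.coeff_eq_zero.not.mpr hv0)
      obtain ⟨w, hw, hmax⟩ := v.coeff.support.exists_max_image (fun x => ℓ x) hsupp
      have hJD : J ⊆ DL cs w := descent_of_max cs hv hw hmax
      set v' := v - v.coeff w • cvec cs w with hv'
      have hcw_mem : cvec cs w ∈ PSub cs J := PSub_mono cs hJD (cvec_mem cs w)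
      have hv'mem : v' ∈ PSub cs J := sub_mem hv (Submodule.smul_mem _ _ hcw_mem)
      have hv'w : v'.coeff w = 0 := by
        rw [hv', MonoidAlgebra.coeff_sub, Finsupp.sub_apply, MonoidAlgebra.coeff_smul_apply, cvec_self, smul_eq_mul, mul_one, sub_self]
      have hsub : v'.coeff.support ⊆ v.coeff.support.erase w ∪ (cvec cs w).coeff.support.erase w := by
        intro x hx
        have hxne : v'.coeff x ≠ 0 := Finsupp.mem_support_iff.mp hx
        have hxw : x ≠ w := by rintro rfl; exact hxne hv'w
        by_cases h1 : v.coeff x = 0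
        · have h2 : (cvec cs w).coeff x ≠ 0 := by
            intro hc
            apply hxne
            rw [hv', MonoidAlgebra.coeff_sub, Finsupp.sub_apply, MonoidAlgebra.coeff_smul_apply, h1, hc, smul_zero, sub_self]
          exact Finset.mem_union_right _
            (Finset.mem_erase.mpr ⟨hxw, Finsupp.mem_support_iff.mpr h2⟩)
        · exact Finset.mem_union_left _
            (Finset.mem_erase.mpr ⟨hxw, Finsupp.mem_support_iff.mpr h1⟩)
      have hble : ∀ x ∈ (cvec cs w).coeff.support.erase w, ℓ x < ℓ w := by
        intro x hx
        rcases cvec_support_le cs (Finset.mem_of_mem_erase hx) with h | h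
        · exact absurd h (Finset.ne_of_mem_erase hx)
        · exact h
      have hKpos : 0 < K := by omega
      have hBsum : (∑ x ∈ (cvec cs w).coeff.support.erase w, K ^ ℓ x) < K ^ ℓ w := by
        rcases Finset.eq_empty_or_nonempty ((cvec cs w).coeff.support.erase w) with he | hne
        · rw [he, Finset.sum_empty]
          exact Nat.pow_pos hKpos
        · have hl1 : 1 ≤ ℓ w := by
            obtain ⟨x, hx⟩ := hne
            have := hble x hx
            omega
          have hterm : ∀ x ∈ (cvec cs w).coeff.support.erase w, K ^ ℓ x ≤ K ^ (ℓ w - 1) := by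
            intro x hx
            exact Nat.pow_le_pow_right (by omega) (by have := hble x hx; omega)
          calc (∑ x ∈ (cvec cs w).coeff.support.erase w, K ^ ℓ x)
              ≤ ((cvec cs w).coeff.support.erase w).card * K ^ (ℓ w - 1) := by
                have := Finset.sum_le_card_nsmul _ _ _ hterm
                simpa [smul_eq_mul] using this
            _ ≤ (K - 1) * K ^ (ℓ w - 1) := by
                apply Nat.mul_le_mul_right
                have := Finset.card_le_univ ((cvec cs w).coeff.support.erase w)
                omega
            _ < K * K ^ (ℓ w - 1) :=
                (Nat.mul_lt_mul_right (Nat.pow_pos hKpos)).mpr (by omega)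
            _ = K ^ (ℓ w) := by
                rw [← pow_succ']
                congr 1
                omega
      have hAsum : K ^ ℓ w + (∑ x ∈ v.coeff.support.erase w, K ^ ℓ x) = ∑ x ∈ v.coeff.support, K ^ ℓ x :=
        Finset.add_sum_erase v.coeff.support (fun x => K ^ ℓ x) hw
      have hμ' : (∑ x ∈ v'.coeff.support, K ^ ℓ x) < ∑ x ∈ v.coeff.support, K ^ ℓ x := by
        have hu1 : (∑ x ∈ v'.coeff.support, K ^ ℓ x)
            ≤ ∑ x ∈ (v.coeff.support.erase w ∪ (cvec cs w).coeff.support.erase w), K ^ ℓ x :=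
          Finset.sum_le_sum_of_subset hsub
        have hu2 := Finset.sum_union_inter (s₁ := v.coeff.support.erase w)
          (s₂ := (cvec cs w).coeff.support.erase w) (f := fun x => K ^ ℓ x)
        omega
      have hrec : v' ∈ Submodule.span ℂ (cvec cs '' {x : W | J ⊆ DL cs x}) :=
        ihn _ (by omega) v' hv'mem le_rfl
      have hdecomp : v = v' + v.coeff w • cvec cs w := by
        rw [hv']
        abel
      rw [hdecomp]
      exact Submodule.add_mem _ hrec
        (Submodule.smul_mem _ _ (Submodule.subset_span ⟨w, hJD, rfl⟩))
  intro v hv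
  exact main _ v hv le_rfl

theorem PSub_eq_span (J : Set B) :
    PSub cs J = Submodule.span ℂ (cvec cs '' {x : W | J ⊆ DL cs x}) := by
  apply _root_.le_antisymm (PSub_le_span cs J)
  rw [Submodule.span_le]
  rintro _ ⟨x, hx, rfl⟩
  exact PSub_mono cs hx (cvec_mem cs x)

theorem QSub_eq_span (I : Set B) :
    QSub cs I = Submodule.span ℂ (cvec cs '' {x : W | I ⊂ DL cs x}) := by
  apply _root_.le_antisymm
  · apply iSup₂_le
    intro J hJ
    refine le_trans (PSub_le_span cs J) (Submodule.span_mono (Set.image_mono ?_))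
    intro x hx
    exact lt_of_lt_of_le hJ (show J ⊆ DL cs x from hx)
  · rw [Submodule.span_le]
    rintro _ ⟨x, hx, rfl⟩
    have h2 : PSub cs (DL cs x) ≤ QSub cs I :=
      le_iSup₂ (f := fun (J : Set B) (_ : J ∈ {J : Set B | I ⊂ J}) => PSub cs J) (DL cs x) hx
    exact h2 (cvec_mem cs x)

theorem cvec_linearIndependent : LinearIndependent ℂ (cvec cs (W := W)) := by
  rw [Fintype.linearIndependent_iff]
  intro g hg
  by_contra hcon
  push_neg at hcon
  obtain ⟨w₀, hw₀⟩ := hcon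
  set S := Finset.univ.filter (fun w : W => g w ≠ 0) with hS
  have hSne : S.Nonempty := ⟨w₀, by simp [hS, hw₀]⟩
  obtain ⟨w₁, hw₁S, hmax⟩ := S.exists_max_image (fun x => ℓ x) hSne
  have hg₁ : g w₁ ≠ 0 := (Finset.mem_filter.mp hw₁S).2
  have happ := congrArg (fun f : MonoidAlgebra ℂ W => f.coeff w₁) hg
  rw [MonoidAlgebra.coeff_sum, Finset.sum_apply'] at happ
  rw [Finset.sum_eq_single w₁] at happ
  · rw [MonoidAlgebra.coeff_smul_apply, cvec_self, smul_eq_mul, mul_one] at happ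
    exact hg₁ (by simpa using happ)
  · intro x _ hxne
    rw [MonoidAlgebra.coeff_smul_apply]
    by_cases hgx : g x = 0
    · rw [hgx, zero_smul]
    · have hle : ℓ x ≤ ℓ w₁ := hmax x (by simp [hS, hgx])
      have hzero : (cvec cs x).coeff w₁ = 0 := by
        by_contra hne
        rcases cvec_support_le cs (Finsupp.mem_support_iff.mpr hne) with h | h
        · exact hxne h.symm
        · omega
      rw [hzero, smul_zero]
  · intro h
    exact absurd (Finset.mem_univ w₁) h

theorem finrank_span_cvec (S : Set W) :
    Module.finrank ℂ (Submodule.span ℂ (cvec cs '' S)) = Nat.card S := by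
  have hli : LinearIndependent ℂ (fun x : S => cvec cs (x : W)) :=
    (cvec_linearIndependent cs).comp _ Subtype.val_injective
  have himg : cvec cs '' S = Set.range (fun x : S => cvec cs (x : W)) :=
    Set.image_eq_range _ _
  rw [himg, finrank_span_eq_card hli, Nat.card_eq_fintype_card]

theorem card_split (I : Set B) :
    Nat.card {w : W // I ⊆ DL cs w}
      = Nat.card {w : W // I ⊂ DL cs w} + Nat.card {w : W // DL cs w = I} := by
  rw [Nat.card_eq_fintype_card, Nat.card_eq_fintype_card, Nat.card_eq_fintype_card,
    Fintype.card_subtype, Fintype.card_subtype, Fintype.card_subtype]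
  rw [← Finset.card_union_of_disjoint]
  · congr 1
    ext w
    simp only [Finset.mem_filter, Finset.mem_union, Finset.mem_univ, true_and]
    constructor
    · intro h
      by_cases he : DL cs w = I
      · exact Or.inr he
      · exact Or.inl (ssubset_of_subset_of_ne h (Ne.symm he))
    · rintro (h | h)
      · exact h.le
      · rw [h]
  · rw [Finset.disjoint_left]
    intro w h1 h2
    have h1' := (Finset.mem_filter.mp h1).2
    have h2' := (Finset.mem_filter.mp h2).2
    rw [h2'] at h1'
    exact (lt_irrefl _ h1')

end linalg

/-- for `W` finite, `Q_I ⊆ P_I`, and the dimension of the quotient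
`P_I / Q_I` is the number of `w ∈ W` with `D_L(w) = I`. -/
theorem finrank_PSub_quotient_QSub (cs : CoxeterSystem M W) [Finite W] (I : Set B) :
    QSub cs I ≤ PSub cs I ∧
    Module.finrank ℂ
        (PSub cs I ⧸ Submodule.comap (PSub cs I).subtype (QSub cs I)) =
      Nat.card {w : W // {i : B | cs.IsLeftDescent w i} = I} := by
  letI : Fintype W := Fintype.ofFinite W
  haveI : Module.Finite ℂ (MonoidAlgebra ℂ W) :=
    Module.Finite.equiv ((Finsupp.linearEquivFunOnFinite ℂ ℂ W).symm.trans
        (MonoidAlgebra.coeffLinearEquiv ℂ).symm)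
  have hQP : QSub cs I ≤ PSub cs I := by
    apply iSup₂_le
    intro J hJ
    exact PSub_mono cs hJ.le
  refine ⟨hQP, ?_⟩
  have h1 : Module.finrank ℂ (PSub cs I) = Nat.card {w : W // I ⊆ DL cs w} := by
    rw [PSub_eq_span cs I, finrank_span_cvec cs]
    rfl
  have h2 : Module.finrank ℂ (QSub cs I) = Nat.card {w : W // I ⊂ DL cs w} := by
    rw [QSub_eq_span cs I, finrank_span_cvec cs]
    rfl
  have h3 : Module.finrank ℂ (Submodule.comap (PSub cs I).subtype (QSub cs I))
      = Module.finrank ℂ (QSub cs I) :=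
    LinearEquiv.finrank_eq (Submodule.comapSubtypeEquivOfLe hQP)
  have h4 := Submodule.finrank_quotient_add_finrank
    (Submodule.comap (PSub cs I).subtype (QSub cs I))
  have h5 := card_split cs I
  have h6 : Nat.card {w : W // {i : B | cs.IsLeftDescent w i} = I}
      = Nat.card {w : W // DL cs w = I} := rfl
  omega


end HGA
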